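/- Let H^ε be self-adjoint and P a projection with ‖[H^ε, P]‖ ≤ C ε^{β(N+1)}. Decompose H^ε_N = P H^ε P + (1-P)H^ε(1-P). Then for all t, ‖(1-P) e^{-itε^{-2β}H^ε} P‖ ≤ C' |t| ε^{β(N-1)}. -/

import Mathlib

open NormedSpace Complex

section Aux

variable {E : Type*} [NormedRing E] [StarRing E] [CStarRing E]

lemma aisd_proj_norm_le_one {P : E} (h1 : IsIdempotentElem P) (h2 : IsSelfAdjoint P) :
    ‖P‖ ≤ 1 := by
  have h := CStarRing.norm_star_mul_self (x := P)
  rw [h2.star_eq, h1.eq] at h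
  nlinarith [norm_nonneg P]

end Aux

section Unit

variable {E : Type*} [NormedRing E] [NormedAlgebra ℂ E] [StarRing E]
  [ContinuousStar E] [CompleteSpace E] [StarModule ℂ E]

lemma aisd_exp_mem_unitary {a : E} (ha : IsSelfAdjoint a) {r : ℂ} (hr : star r = -r) :
    NormedSpace.exp (r • a) ∈ unitary E := by
  have hb : r • a ∈ skewAdjoint E := by
    rw [skewAdjoint.mem_iff, star_smul, ha.star_eq, hr, neg_smul]
  letI : NormedAlgebra ℚ E := .restrictScalars ℚ ℂ E
  exact exp_mem_unitary_of_mem_skewAdjoint hb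

end Unit

lemma aisd_deriv_exp_line {E : Type*} [NormedRing E] [NormedAlgebra ℂ E] [CompleteSpace E]
    (a : E) (c : ℂ) (s : ℝ) :
    HasDerivAt (fun s : ℝ => NormedSpace.exp ((c * (s : ℂ)) • a))
      (c • (NormedSpace.exp ((c * (s : ℂ)) • a) * a)) s := by
  have h1 : HasDerivAt (fun s : ℝ => (s : ℂ)) 1 s := by
    simpa using (hasDerivAt_id s).ofReal_comp
  have h2 : HasDerivAt (fun s : ℝ => c * (s : ℂ)) c s := by
    simpa using h1.const_mul c
  have h3 : HasDerivAt (fun z : ℂ => NormedSpace.exp (z • a))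
      (NormedSpace.exp ((c * (s : ℂ)) • a) * a) (c * (s : ℂ)) :=
    hasDerivAt_exp_smul_const a _
  exact h3.scomp s h2

lemma aisd_key_identity {E : Type*} [Ring E] (A P x y : E) (hPP : P * P = P)
    (hc : y * A = A * y) :
    x * (P*A*P + (1-P)*A*(1-P)) * ((1-P) * y * P) - x * ((1-P) * (y * A) * P)
      = -(x * ((1-P) * A * P * (y * P))) := by
  have hPP' : ∀ z : E, P * (P * z) = P * z := fun z => by rw [← mul_assoc, hPP]
  have h1 : (P*A*P + (1-P)*A*(1-P)) * (1-P) = (1-P) * A * (1-P) := by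
    simp only [mul_sub, sub_mul, mul_add, add_mul, mul_one, one_mul, mul_assoc, hPP, hPP']
    abel
  calc x * (P*A*P + (1-P)*A*(1-P)) * ((1-P) * y * P) - x * ((1-P) * (y * A) * P)
      = x * (((P*A*P + (1-P)*A*(1-P)) * (1-P)) * (y * P)) - x * ((1-P) * (A * y) * P) := by
        rw [hc]; noncomm_ring
    _ = x * (((1-P) * A * (1-P)) * (y * P)) - x * ((1-P) * (A * y) * P) := by rw [h1]
    _ = -(x * ((1-P) * A * P * (y * P))) := by noncomm_ring

lemma aisd_smul_identity {E : Type*} [NormedRing E] [NormedAlgebra ℂ E] (c : ℂ) (x y P A : E)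
    (hPP : P * P = P) (hc : y * A = A * y) :
    (c • (x * (P*A*P + (1-P)*A*(1-P)))) * ((1 - P) * y * P)
        + x * ((1 - P) * ((-c) • (y * A)) * P)
      = (-c) • (x * ((1-P) * A * P * (y * P))) := by
  simp only [smul_mul_assoc, mul_smul_comm, neg_smul, smul_neg, mul_neg, neg_mul]
  rw [← sub_eq_add_neg, ← smul_sub, ← smul_neg]
  congr 1
  exact aisd_key_identity A P x y hPP hc

set_option maxHeartbeats 1000000 in
/-- Let `H^ε` be self-adjoint and `P` an orthogonal projection with
`‖[H^ε, P]‖ ≤ C ε^{β(N+1)}`. Then for all `t`,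
`‖(1-P) e^{-itε^{-2β}H^ε} P‖ ≤ C' |t| ε^{β(N-1)}`. -/
theorem almost_invariant_subspace_dynamics
    (β C : ℝ) (N : ℕ) (hβ : 0 < β) (hC : 0 ≤ C) (hN : 1 ≤ N) :
    ∃ C' : ℝ, 0 < C' ∧
      ∀ (Hsp : Type) [inst1 : NormedAddCommGroup Hsp] [inst2 : InnerProductSpace ℂ Hsp]
        [inst3 : CompleteSpace Hsp]
        (A P : Hsp →L[ℂ] Hsp) (ε : ℝ), 0 < ε → ε ≤ 1 →
        IsSelfAdjoint A → IsIdempotentElem P → IsSelfAdjoint P →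
        ‖A * P - P * A‖ ≤ C * ε ^ (β * (N + 1)) →
        ∀ t : ℝ,
          ‖(1 - P) *
              NormedSpace.exp ((-Complex.I * (t : ℂ) * ((ε ^ (-(2 * β)) : ℝ) : ℂ)) • A) *
              P‖ ≤ C' * |t| * ε ^ (β * ((N : ℝ) - 1)) := by
  refine ⟨C + 1, by linarith, ?_⟩
  intro Hsp _ _ _ A P ε hε hε1 hA hP hPsa hcomm t
  set cc : ℂ := ((ε ^ (-(2 * β)) : ℝ) : ℂ) with hcc
  have hPP : P * P = P := hP
  have hAN : IsSelfAdjoint (P * A * P + (1 - P) * A * (1 - P)) := by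
    have h1 : IsSelfAdjoint (P * A * P) := by
      simpa [hPsa.star_eq] using hA.conjugate' (z := P)
    have h2 : IsSelfAdjoint ((1 - P) * A * (1 - P)) := by
      have hQsa' : star (1 - P : Hsp →L[ℂ] Hsp) = 1 - P := by
        simp [star_sub, hPsa.star_eq]
      simpa [hQsa'] using hA.conjugate' (z := (1 - P : Hsp →L[ℂ] Hsp))
    exact h1.add h2
  have hPle : ‖P‖ ≤ 1 := aisd_proj_norm_le_one hP hPsa
  have hQP : (1 - P : Hsp →L[ℂ] Hsp) * (1 - P) = 1 - P := by
    simp [mul_sub, sub_mul, hPP, sub_sub_cancel]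
  have hQsa : IsSelfAdjoint (1 - P : Hsp →L[ℂ] Hsp) := by
    rw [IsSelfAdjoint, star_sub, star_one, hPsa.star_eq]
  have hQle : ‖(1 - P : Hsp →L[ℂ] Hsp)‖ ≤ 1 := aisd_proj_norm_le_one hQP hQsa
  have hstar1 : ∀ s : ℝ, star ((Complex.I * cc) * (s : ℂ)) = -((Complex.I * cc) * (s : ℂ)) := by
    intro s
    simp only [hcc, star_mul', Complex.star_def, Complex.conj_ofReal, map_mul, Complex.conj_I]
    ring
  have hstar2 : ∀ s : ℝ, star ((-(Complex.I * cc)) * (s : ℂ))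
      = -((-(Complex.I * cc)) * (s : ℂ)) := by
    intro s
    simp only [hcc, star_mul', Complex.star_def, Complex.conj_ofReal, map_mul, map_neg,
      Complex.conj_I]
    ring
  set e₁ : ℝ → (Hsp →L[ℂ] Hsp) := fun s =>
    NormedSpace.exp (((Complex.I * cc) * (s : ℂ)) • (P * A * P + (1 - P) * A * (1 - P))) with he₁
  set e₂ : ℝ → (Hsp →L[ℂ] Hsp) := fun s =>
    NormedSpace.exp (((-(Complex.I * cc)) * (s : ℂ)) • A) with he₂
  have hU1 : ∀ s : ℝ, e₁ s ∈ unitary (Hsp →L[ℂ] Hsp) := fun s =>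
    aisd_exp_mem_unitary hAN (hstar1 s)
  have hU2 : ∀ s : ℝ, e₂ s ∈ unitary (Hsp →L[ℂ] Hsp) := fun s =>
    aisd_exp_mem_unitary hA (hstar2 s)
  set G : ℝ → (Hsp →L[ℂ] Hsp) := fun s => e₁ s * ((1 - P) * e₂ s * P) with hG
  have hG0 : G 0 = 0 := by
    have : G 0 = 1 * ((1 - P) * 1 * P) := by
      rw [hG, he₁, he₂]
      simp [NormedSpace.exp_zero]
    rw [this]
    simp [sub_mul, hPP]
  have hcomm2 : ∀ s : ℝ, e₂ s * A = A * e₂ s := fun s =>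
    (((Commute.refl A).smul_right _).exp_right).symm
  have hder : ∀ s : ℝ, HasDerivAt G
      ((-(Complex.I * cc)) • (e₁ s * ((1 - P) * A * P * (e₂ s * P)))) s := by
    intro s
    have h1 := aisd_deriv_exp_line (P * A * P + (1 - P) * A * (1 - P)) (Complex.I * cc) s
    have h2 := aisd_deriv_exp_line (E := Hsp →L[ℂ] Hsp) A (-(Complex.I * cc)) s
    have h3 := h1.mul ((h2.const_mul (1 - P)).mul_const P)
    have h4 := aisd_smul_identity (Complex.I * cc) (e₁ s) (e₂ s) P A hPP (hcomm2 s)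
    rw [← h4]
    exact h3
  have hccnorm : ‖-(Complex.I * cc)‖ = ε ^ (-(2 * β)) := by
    rw [norm_neg, norm_mul, Complex.norm_I, one_mul, hcc, Complex.norm_real,
      Real.norm_eq_abs, abs_of_pos (Real.rpow_pos_of_pos hε _)]
  have hεK : (0:ℝ) ≤ ε ^ (β * (N + 1)) := (Real.rpow_pos_of_pos hε _).le
  have hMle : ‖(1 - P) * A * P‖ ≤ C * ε ^ (β * (N + 1)) := by
    have hPP' : ∀ z : Hsp →L[ℂ] Hsp, P * (P * z) = P * z := fun z => by
      rw [← mul_assoc, hPP]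
    have hMeq : (1 - P) * A * P = (1 - P) * (A * P - P * A) * P := by
      simp only [mul_sub, sub_mul, mul_assoc, hPP, hPP', one_mul, mul_one]
      abel
    rw [hMeq]
    calc ‖(1 - P) * (A * P - P * A) * P‖
        ≤ ‖(1 - P) * (A * P - P * A)‖ * ‖P‖ := norm_mul_le _ _
      _ ≤ (‖(1 - P : Hsp →L[ℂ] Hsp)‖ * ‖A * P - P * A‖) * ‖P‖ :=
          mul_le_mul_of_nonneg_right (norm_mul_le _ _) (norm_nonneg _)
      _ ≤ (1 * (C * ε ^ (β * (N + 1)))) * 1 := by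
          have h1 : ‖(1 - P : Hsp →L[ℂ] Hsp)‖ * ‖A * P - P * A‖ ≤ 1 * (C * ε ^ (β * (N + 1))) :=
            mul_le_mul hQle hcomm (norm_nonneg _) zero_le_one
          exact mul_le_mul h1 hPle (norm_nonneg _)
            (mul_nonneg zero_le_one (mul_nonneg hC hεK))
      _ = C * ε ^ (β * (N + 1)) := by ring
  have hbound : ∀ s : ℝ,
      ‖(-(Complex.I * cc)) • (e₁ s * ((1 - P) * A * P * (e₂ s * P)))‖
        ≤ ε ^ (-(2 * β)) * (C * ε ^ (β * (N + 1))) := by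
    intro s
    rw [norm_smul, hccnorm]
    have hX : ‖e₁ s * ((1 - P) * A * P * (e₂ s * P))‖ ≤ C * ε ^ (β * (N + 1)) := by
      calc ‖e₁ s * ((1 - P) * A * P * (e₂ s * P))‖
          = ‖(1 - P) * A * P * (e₂ s * P)‖ := CStarRing.norm_mem_unitary_mul _ (hU1 s)
        _ ≤ ‖(1 - P) * A * P‖ * ‖e₂ s * P‖ := norm_mul_le _ _
        _ ≤ (C * ε ^ (β * (N + 1))) * 1 := by
            have h2 : ‖e₂ s * P‖ ≤ 1 := by
              rw [CStarRing.norm_mem_unitary_mul P (hU2 s)]; exact hPle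
            exact mul_le_mul hMle h2 (norm_nonneg _) (mul_nonneg hC hεK)
        _ = C * ε ^ (β * (N + 1)) := by ring
    exact mul_le_mul_of_nonneg_left hX (Real.rpow_pos_of_pos hε _).le
  have hmvt := convex_univ.norm_image_sub_le_of_norm_hasDerivWithin_le
    (f := G)
    (f' := fun s => (-(Complex.I * cc)) • (e₁ s * ((1 - P) * A * P * (e₂ s * P))))
    (fun x _ => (hder x).hasDerivWithinAt)
    (fun x _ => hbound x) (Set.mem_univ (0:ℝ)) (Set.mem_univ t)
  rw [hG0, sub_zero, sub_zero, Real.norm_eq_abs] at hmvt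
  have hfinal : ‖(1 - P) * e₂ t * P‖ ≤ (ε ^ (-(2 * β)) * (C * ε ^ (β * (N + 1)))) * |t| := by
    calc ‖(1 - P) * e₂ t * P‖ = ‖e₁ t * ((1 - P) * e₂ t * P)‖ :=
          (CStarRing.norm_mem_unitary_mul _ (hU1 t)).symm
      _ = ‖G t‖ := rfl
      _ ≤ _ := hmvt
  have hexp : ε ^ (-(2 * β)) * ε ^ (β * ((N:ℝ) + 1)) = ε ^ (β * ((N : ℝ) - 1)) := by
    rw [← Real.rpow_add hε]
    congr 1
    ring
  have hεN1 : (0:ℝ) ≤ ε ^ (β * ((N:ℝ) - 1)) := (Real.rpow_pos_of_pos hε _).le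
  have hscal : (-Complex.I * (t : ℂ) * cc) • A = ((-(Complex.I * cc)) * (t : ℂ)) • A := by
    congr 1
    ring
  calc ‖(1 - P) * NormedSpace.exp ((-Complex.I * (t : ℂ) * cc) • A) * P‖
      = ‖(1 - P) * e₂ t * P‖ := by rw [he₂]; rw [hscal]
    _ ≤ (ε ^ (-(2 * β)) * (C * ε ^ (β * (N + 1)))) * |t| := hfinal
    _ = C * |t| * (ε ^ (-(2 * β)) * ε ^ (β * ((N:ℝ) + 1))) := by push_cast; ring
    _ = C * |t| * ε ^ (β * ((N : ℝ) - 1)) := by rw [hexp]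
    _ ≤ (C + 1) * |t| * ε ^ (β * ((N : ℝ) - 1)) := by
        gcongr
        linarith
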